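/- Let (X_a,X_b) be a random pair whose distribution on [0,∞)^2 is absolutely continuous with joint density f_{a,b} and marginal densities f_a, f_b. Assume: there is a positive function g, regularly varying at infinity with index −α−1<−1, with lim_{t→∞} f_a(t)/g(t)=c_a∈(0,∞) and lim_{t→∞} f_b(t)/g(t)=c_b∈(0,∞); and there are probability densities q_{a,b} and q_{b,a} on (0,∞) such that for every y∈(0,∞), lim_{t→∞} t·f_{a,b}(t,ty)/f_a(t)=q_{a,b}(y) and lim_{t→∞} t·f_{a,b}(ty,t)/f_b(t)=q_{b,a}(y). Then for Lebesgue-almost every y∈(0,∞): c_b·y^α·q_{b,a}(y) = c_a·y^{−2}·q_{a,b}(1/y). -/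

import Mathlib

open MeasureTheory ProbabilityTheory Filter Topology
open scoped ENNReal

/-- `g` is regularly varying at infinity with index `ρ`. -/
def RegularlyVarying (g : ℝ → ℝ) (ρ : ℝ) : Prop :=
  (∀ᶠ t in atTop, 0 < g t) ∧
    ∀ l : ℝ, 0 < l → Tendsto (fun t => g (l * t) / g t) atTop (𝓝 (l ^ ρ))

/-- equation `eq:quba`: for an absolutely continuous pair with balanced
regularly varying marginal densities and limiting conditional densities `q_{a,b}`, `q_{b,a}`,
one has `c_b y^α q_{b,a}(y) = c_a y^{-2} q_{a,b}(1/y)` for Lebesgue-a.e. `y ∈ (0,∞)`. -/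
theorem density_increment_reversal
    {Ω : Type*} [MeasurableSpace Ω] (μ : Measure Ω) [IsProbabilityMeasure μ]
    (Xa Xb : Ω → ℝ) (hXa : Measurable Xa) (hXb : Measurable Xb)
    (hXann : ∀ ω, 0 ≤ Xa ω) (hXbnn : ∀ ω, 0 ≤ Xb ω)
    (fab : ℝ → ℝ → ℝ) (hfabnn : ∀ x y, 0 ≤ fab x y)
    (hfabmeas : Measurable fun p : ℝ × ℝ => fab p.1 p.2)
    (hjoint : μ.map (fun ω => (Xa ω, Xb ω))
      = (volume : Measure (ℝ × ℝ)).withDensity fun p => ENNReal.ofReal (fab p.1 p.2))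
    (fa fb : ℝ → ℝ) (hfann : ∀ t, 0 ≤ fa t) (hfbnn : ∀ t, 0 ≤ fb t)
    (hfa : μ.map Xa = volume.withDensity fun t => ENNReal.ofReal (fa t))
    (hfb : μ.map Xb = volume.withDensity fun t => ENNReal.ofReal (fb t))
    (g : ℝ → ℝ) (α : ℝ) (hα : 0 < α) (hg : RegularlyVarying g (-α - 1))
    (ca cb : ℝ) (hca : 0 < ca) (hcb : 0 < cb)
    (hfa_lim : Tendsto (fun t => fa t / g t) atTop (𝓝 ca))
    (hfb_lim : Tendsto (fun t => fb t / g t) atTop (𝓝 cb))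
    (qab qba : ℝ → ℝ)
    (hqabnn : ∀ y, 0 ≤ qab y) (hqbann : ∀ y, 0 ≤ qba y)
    (hqab_dens : ∫ y in Set.Ioi (0:ℝ), qab y = 1)
    (hqba_dens : ∫ y in Set.Ioi (0:ℝ), qba y = 1)
    (hqab : ∀ y : ℝ, 0 < y →
      Tendsto (fun t => t * fab t (t * y) / fa t) atTop (𝓝 (qab y)))
    (hqba : ∀ y : ℝ, 0 < y →
      Tendsto (fun t => t * fab (t * y) t / fb t) atTop (𝓝 (qba y))) :
    ∀ᵐ y ∂(volume.restrict (Set.Ioi (0:ℝ))),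
      cb * y ^ α * qba y = ca * y ^ (-2 : ℝ) * qab (1 / y) := by

  refine MeasureTheory.ae_restrict_of_forall_mem measurableSet_Ioi ?_
  intro y hy
  rw [Set.mem_Ioi] at hy
  have hy' : (0:ℝ) < 1 / y := by positivity
  have h1 : Tendsto (fun t : ℝ => t * y) atTop atTop :=
    Tendsto.atTop_mul_const hy tendsto_id
  have hgpos : ∀ᶠ t in atTop, 0 < g t := hg.1
  have hfapos : ∀ᶠ t in atTop, 0 < fa t := by
    filter_upwards [hgpos, hfa_lim.eventually (eventually_gt_nhds hca)] with t h1 h2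
    have : fa t / g t * g t = fa t := div_mul_cancel₀ _ h1.ne'
    nlinarith
  have hfbpos : ∀ᶠ t in atTop, 0 < fb t := by
    filter_upwards [hgpos, hfb_lim.eventually (eventually_gt_nhds hcb)] with t h1 h2
    have : fb t / g t * g t = fb t := div_mul_cancel₀ _ h1.ne'
    nlinarith
  have hA : Tendsto (fun t => (t * y) * fab (t * y) t / fa (t * y)) atTop
      (𝓝 (qab (1 / y))) := by
    have := (hqab (1 / y) hy').comp h1
    refine this.congr fun t => ?_
    simp only [Function.comp]
    rw [mul_one_div, mul_div_cancel_right₀ _ hy.ne']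
  have hB : Tendsto (fun t => fa (t * y) / g (t * y)) atTop (𝓝 ca) := hfa_lim.comp h1
  have hC : Tendsto (fun t => g (y * t) / g t) atTop (𝓝 (y ^ (-α - 1))) := hg.2 y hy
  have hD : Tendsto (fun t => g t / fb t) atTop (𝓝 cb⁻¹) := by
    simpa [inv_div] using hfb_lim.inv₀ hcb.ne'
  have hprod : Tendsto (fun t => (t * y) * fab (t * y) t / fa (t * y) *
      (fa (t * y) / g (t * y)) * (g (y * t) / g t) * (g t / fb t) * (1 / y)) atTop
      (𝓝 (qab (1 / y) * ca * y ^ (-α - 1) * cb⁻¹ * (1 / y))) :=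
    (((hA.mul hB).mul hC).mul hD).mul tendsto_const_nhds
  have heq : (fun t => (t * y) * fab (t * y) t / fa (t * y) *
      (fa (t * y) / g (t * y)) * (g (y * t) / g t) * (g t / fb t) * (1 / y))
      =ᶠ[atTop] fun t => t * fab (t * y) t / fb t := by
    filter_upwards [hgpos, hfbpos, h1.eventually hgpos, h1.eventually hfapos] with t
      hg1 hfb1 hg2 hfa1
    rw [mul_comm y t]
    field_simp
  have hlim : Tendsto (fun t => t * fab (t * y) t / fb t) atTop
      (𝓝 (qab (1 / y) * ca * y ^ (-α - 1) * cb⁻¹ * (1 / y))) := hprod.congr' heq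
  have hval : qba y = qab (1 / y) * ca * y ^ (-α - 1) * cb⁻¹ * (1 / y) :=
    tendsto_nhds_unique (hqba y hy) hlim
  have hpow : y ^ α * y ^ (-α - 1) * (1 / y) = y ^ (-2 : ℝ) := by
    rw [one_div, ← Real.rpow_neg_one y, ← Real.rpow_add hy, ← Real.rpow_add hy]
    ring_nf
  calc cb * y ^ α * qba y
      = qab (1 / y) * ca * (y ^ α * y ^ (-α - 1) * (1 / y)) := by
        rw [hval]; field_simp
    _ = ca * y ^ (-2 : ℝ) * qab (1 / y) := by rw [hpow]; ring
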